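/- arXiv:2601.22003 — 4 statements merged into one kernel-verified Lean document; each statement's English description precedes it below -/
import Mathlib

section
/- Let π₀,…,π_k be finite measures on ℝ^d with positive unnormalised Lebesgue densities Π₀,…,Π_k (each with 0 < ∫ Π_n(x) dx < ∞). Let K₁,…,K_k and L₀,…,L_{k−1} be Markov kernels on ℝ^d admitting positive transition densities with respect to Lebesgue measure, and let (X₀,…,X_k) be the Markov chain with X₀ having density q₀(x) = Π₀(x)/∫Π₀, and X_n | X_{n−1} = x distributed according to K_n(x,·). Define the incremental weights G_n(x,y) = Π_n(y) L_{n−1}(y,x) / (Π_{n−1}(x) K_n(x,y)). Then for every measurable φ: ℝ^d → ℝ^m for which the relevant integrals are finite, E[φ(X_k) ∏_{n=1}^k G_n(X_{n−1},X_n)] = (∫ φ(x) Π_k(x) dx) / (∫ Π₀(x) dx); in particular, E[φ(X_k) ∏_{n=1}^k G_n(X_{n−1},X_n)] / E[∏_{n=1}^k G_n(X_{n−1},X_n)] = ∫ φ(x) π_k(x) dx, where π_k = Π_k/∫Π_k is the normalised density. -/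
open MeasureTheory

noncomputable section

lemma aux_chain {d : ℕ} : ∀ (k : ℕ) (L : Fin k → EuclideanSpace ℝ (Fin d) → EuclideanSpace ℝ (Fin d) → ENNReal),
    (∀ n, Measurable (Function.uncurry (L n))) → (∀ n y, ∫⁻ x, L n y x = 1) →
    ∀ (g : EuclideanSpace ℝ (Fin d) → ENNReal), Measurable g →
    ∫⁻ p : Fin (k + 1) → EuclideanSpace ℝ (Fin d),
        g (p (Fin.last k)) * ∏ n : Fin k, L n (p n.succ) (p n.castSucc) = ∫⁻ x, g x := by
  intro k
  induction k with
  | zero =>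
    intro L hLm hL1 g hg
    simp only [Finset.univ_eq_empty, Finset.prod_empty, mul_one]
    have := (measurePreserving_funUnique (volume : Measure (EuclideanSpace ℝ (Fin d))) (Fin 1)).lintegral_comp hg
    rw [← this, volume_pi]
    rfl
  | succ k ih =>
    intro L hLm hL1 g hg
    set F : (Fin (k + 2) → EuclideanSpace ℝ (Fin d)) → ENNReal := fun p =>
      g (p (Fin.last (k + 1))) * ∏ n : Fin (k + 1), L n (p n.succ) (p n.castSucc) with hF
    have hFm : Measurable F := by
      apply Measurable.mul
      · exact hg.comp (measurable_pi_apply (Fin.last (k + 1)))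
      · apply Finset.measurable_prod
        intro n _
        have h1 : Measurable fun a : Fin (k + 2) → EuclideanSpace ℝ (Fin d) =>
            (a n.succ, a n.castSucc) :=
          (measurable_pi_apply _).prodMk (measurable_pi_apply _)
        exact ((hLm n).comp h1 : Measurable fun a : Fin (k + 2) → EuclideanSpace ℝ (Fin d) =>
          Function.uncurry (L n) (a n.succ, a n.castSucc))
    have hmp := (measurePreserving_piFinSuccAbove
      (fun _ : Fin (k + 2) => (volume : Measure (EuclideanSpace ℝ (Fin d)))) 0).symm
    have hcomp := hmp.lintegral_comp hFm
    have hvol : (volume : Measure (Fin (k + 2) → EuclideanSpace ℝ (Fin d)))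
        = Measure.pi fun _ => volume := volume_pi
    rw [show (∫⁻ p : Fin (k + 1 + 1) → EuclideanSpace ℝ (Fin d),
        g (p (Fin.last (k + 1))) * ∏ n : Fin (k + 1), L n (p n.succ) (p n.castSucc))
        = ∫⁻ p, F p from rfl, hvol, ← hcomp]
    rw [MeasureTheory.lintegral_prod_symm
      (fun z => F ((MeasurableEquiv.piFinSuccAbove (fun _ : Fin (k + 2) => EuclideanSpace ℝ (Fin d)) 0).symm z))
      ((hFm.comp hmp.measurable).aemeasurable)]
    have key : ∀ (x : EuclideanSpace ℝ (Fin d)) (r : Fin (k + 1) → EuclideanSpace ℝ (Fin d)),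
        F ((MeasurableEquiv.piFinSuccAbove (fun _ : Fin (k + 2) => EuclideanSpace ℝ (Fin d)) 0).symm (x, r))
        = (g (r (Fin.last k)) * ∏ n : Fin k, L n.succ (r n.succ) (r n.castSucc))
            * L 0 (r 0) x := by
      intro x r
      have hsymm : (MeasurableEquiv.piFinSuccAbove (fun _ : Fin (k + 2) => EuclideanSpace ℝ (Fin d)) 0).symm (x, r)
          = Fin.insertNth (α := fun _ : Fin (k + 2) => EuclideanSpace ℝ (Fin d)) 0 x r := rfl
      rw [hsymm, hF]
      have hval : ∀ j : Fin (k + 1), Fin.insertNth (α := fun _ : Fin (k + 2) => EuclideanSpace ℝ (Fin d)) 0 x r j.succ = r j := by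
        intro j
        rw [← Fin.zero_succAbove j, Fin.insertNth_apply_succAbove]
      simp only
      rw [Fin.prod_univ_succ]
      have h0 : Fin.insertNth (α := fun _ : Fin (k + 2) => EuclideanSpace ℝ (Fin d)) 0 x r ((0 : Fin (k + 1)).castSucc) = x := by
        simp
      have hlast : Fin.insertNth (α := fun _ : Fin (k + 2) => EuclideanSpace ℝ (Fin d)) 0 x r (Fin.last (k + 1)) = r (Fin.last k) := by
        rw [← Fin.succ_last, hval]
      rw [hlast, h0, hval 0]
      have hprod : ∀ n : Fin k,
          L n.succ (Fin.insertNth (α := fun _ : Fin (k + 2) => EuclideanSpace ℝ (Fin d)) 0 x r n.succ.succ)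
            (Fin.insertNth (α := fun _ : Fin (k + 2) => EuclideanSpace ℝ (Fin d)) 0 x r n.succ.castSucc)
          = L n.succ (r n.succ) (r n.castSucc) := by
        intro n
        rw [hval n.succ, ← Fin.succ_castSucc, hval n.castSucc]
      rw [Finset.prod_congr rfl fun n _ => hprod n]
      ring
    simp only [key]
    have hinner : ∀ r : Fin (k + 1) → EuclideanSpace ℝ (Fin d),
        (∫⁻ x, (g (r (Fin.last k)) * ∏ n : Fin k, L n.succ (r n.succ) (r n.castSucc))
            * L 0 (r 0) x)
        = g (r (Fin.last k)) * ∏ n : Fin k, L n.succ (r n.succ) (r n.castSucc) := by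
      intro r
      have hm0 : Measurable fun x => L 0 (r 0) x :=
        ((hLm 0).comp (measurable_prodMk_left) :
          Measurable fun x => Function.uncurry (L 0) (r 0, x))
      rw [lintegral_const_mul _ hm0]
      rw [hL1 0 (r 0), mul_one]
    simp only [hinner]
    have := ih (fun n => L n.succ) (fun n => hLm n.succ) (fun n y => hL1 n.succ y) g hg
    rw [volume_pi] at this
    exact this
lemma aux_telescope : ∀ (k : ℕ) (f : Fin (k + 1) → ℝ), (∀ n, f n ≠ 0) →
    ∏ n : Fin k, f n.succ / f n.castSucc = f (Fin.last k) / f 0 := by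
  intro k
  induction k with
  | zero => intro f hf; simp [div_self (hf 0)]
  | succ k ih =>
    intro f hf
    rw [Fin.prod_univ_castSucc]
    have h2 : (∏ n : Fin k, f n.castSucc.succ / f n.castSucc.castSucc)
        = f (Fin.last k).castSucc / f 0 := by
      have := ih (fun n => f n.castSucc) (fun n => hf _)
      simp only [Fin.succ_castSucc, Fin.castSucc_zero] at this
      rw [← this]
      refine Finset.prod_congr rfl fun n _ => ?_
      rw [Fin.succ_castSucc]
    rw [h2, Fin.succ_last]
    rw [div_mul_div_comm, mul_comm, mul_div_mul_right _ _ (hf _)]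

lemma aux_lintegral_one {α : Type*} [MeasurableSpace α] {μ : Measure α} {f : α → ℝ}
    (hpos : ∀ x, 0 ≤ f x) (h : ∫ x, f x ∂μ = 1) :
    ∫⁻ x, ENNReal.ofReal (f x) ∂μ = 1 := by
  by_cases hint : Integrable f μ
  · rw [← ofReal_integral_eq_lintegral_ofReal hint (ae_of_all _ hpos), h, ENNReal.ofReal_one]
  · rw [integral_undef hint] at h; norm_num at h


/-- Feynman–Kac identity for SMC samplers: if the chain `(X₀,…,X_k)` has joint density
`q(x) = (Π₀(x₀)/∫Π₀) ∏ₙ Kₙ(xₙ₋₁,xₙ)` and incremental weights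
`Gₙ(x,y) = Πₙ(y) Lₙ₋₁(y,x) / (Πₙ₋₁(x) Kₙ(x,y))`, then
`E[φ(X_k) ∏ₙ Gₙ] = (∫ φ Π_k)/(∫ Π₀)` and the self-normalised ratio equals `∫ φ π_k`. -/
theorem feynman_kac_identity
    {d m k : ℕ} (hk : 1 ≤ k)
    (Pim : Fin (k + 1) → EuclideanSpace ℝ (Fin d) → ℝ)
    (hPim_meas : ∀ n, Measurable (Pim n))
    (hPim_pos : ∀ n x, 0 < Pim n x)
    (hPim_int : ∀ n, Integrable (Pim n))
    (hPim_ipos : ∀ n, 0 < ∫ x, Pim n x)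
    (K L : Fin k → EuclideanSpace ℝ (Fin d) → EuclideanSpace ℝ (Fin d) → ℝ)
    (hK_meas : ∀ n, Measurable (Function.uncurry (K n)))
    (hL_meas : ∀ n, Measurable (Function.uncurry (L n)))
    (hK_pos : ∀ n x y, 0 < K n x y)
    (hL_pos : ∀ n x y, 0 < L n x y)
    (hK_markov : ∀ n x, ∫ y, K n x y = 1)
    (hL_markov : ∀ n y, ∫ x, L n y x = 1)
    (φ : EuclideanSpace ℝ (Fin d) → EuclideanSpace ℝ (Fin m))
    (hφ_meas : Measurable φ)
    (hφ_int : Integrable fun x => Pim (Fin.last k) x • φ x)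
    (q : (Fin (k + 1) → EuclideanSpace ℝ (Fin d)) → ℝ)
    (hq : ∀ p, q p =
      Pim 0 (p 0) / (∫ x, Pim 0 x) * ∏ n : Fin k, K n (p n.castSucc) (p n.succ))
    (G : Fin k → EuclideanSpace ℝ (Fin d) → EuclideanSpace ℝ (Fin d) → ℝ)
    (hG : ∀ n x y, G n x y = Pim n.succ y * L n y x / (Pim n.castSucc x * K n x y))
    (hint_vec : Integrable fun p : Fin (k + 1) → EuclideanSpace ℝ (Fin d) =>
      (q p * ∏ n : Fin k, G n (p n.castSucc) (p n.succ)) • φ (p (Fin.last k)))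
    (hint_sca : Integrable fun p : Fin (k + 1) → EuclideanSpace ℝ (Fin d) =>
      q p * ∏ n : Fin k, G n (p n.castSucc) (p n.succ)) :
    (∫ p : Fin (k + 1) → EuclideanSpace ℝ (Fin d),
        (q p * ∏ n : Fin k, G n (p n.castSucc) (p n.succ)) • φ (p (Fin.last k)))
      = (∫ x, Pim 0 x)⁻¹ • ∫ x, Pim (Fin.last k) x • φ x ∧
    (∫ p : Fin (k + 1) → EuclideanSpace ℝ (Fin d),
        q p * ∏ n : Fin k, G n (p n.castSucc) (p n.succ))⁻¹ •
      (∫ p : Fin (k + 1) → EuclideanSpace ℝ (Fin d),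
        (q p * ∏ n : Fin k, G n (p n.castSucc) (p n.succ)) • φ (p (Fin.last k)))
      = (∫ x, Pim (Fin.last k) x)⁻¹ • ∫ x, Pim (Fin.last k) x • φ x := by
  set c : ℝ := ∫ x, Pim 0 x with hc
  have hc_pos : 0 < c := hPim_ipos 0
  set w₀ : (Fin (k + 1) → EuclideanSpace ℝ (Fin d)) → ℝ := fun p =>
    Pim (Fin.last k) (p (Fin.last k)) * ∏ n : Fin k, L n (p n.succ) (p n.castSucc) with hw₀
  -- pointwise identity
  have hpt : ∀ p : Fin (k + 1) → EuclideanSpace ℝ (Fin d),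
      q p * ∏ n : Fin k, G n (p n.castSucc) (p n.succ) = c⁻¹ * w₀ p := by
    intro p
    have hPne : ∀ n : Fin (k + 1), Pim n (p n) ≠ 0 := fun n => (hPim_pos n (p n)).ne'
    rw [hq, mul_assoc, ← Finset.prod_mul_distrib]
    have hterm : ∀ n : Fin k,
        K n (p n.castSucc) (p n.succ) * G n (p n.castSucc) (p n.succ)
        = (Pim n.succ (p n.succ) / Pim n.castSucc (p n.castSucc))
            * L n (p n.succ) (p n.castSucc) := by
      intro n
      rw [hG]
      have hK0 : K n (p n.castSucc) (p n.succ) ≠ 0 := (hK_pos n _ _).ne'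
      have hP0 : Pim n.castSucc (p n.castSucc) ≠ 0 := hPne n.castSucc
      field_simp
    rw [Finset.prod_congr rfl fun n _ => hterm n, Finset.prod_mul_distrib]
    have htel : (∏ n : Fin k, Pim n.succ (p n.succ) / Pim n.castSucc (p n.castSucc))
        = Pim (Fin.last k) (p (Fin.last k)) / Pim 0 (p 0) :=
      aux_telescope k (fun n => Pim n (p n)) hPne
    rw [htel, hw₀]
    have h0 : Pim 0 (p 0) ≠ 0 := hPne 0
    have hcne : c ≠ 0 := hc_pos.ne'
    field_simp
  have hw₀_nonneg : ∀ p, 0 ≤ w₀ p := by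
    intro p
    exact mul_nonneg (hPim_pos _ _).le
      (Finset.prod_nonneg fun n _ => (hL_pos n _ _).le)
  have hw₀_meas : Measurable w₀ := by
    apply Measurable.mul
    · exact (hPim_meas _).comp (measurable_pi_apply (Fin.last k))
    · apply Finset.measurable_prod
      intro n _
      have h1 : Measurable fun p : Fin (k + 1) → EuclideanSpace ℝ (Fin d) =>
          (p n.succ, p n.castSucc) :=
        (measurable_pi_apply _).prodMk (measurable_pi_apply _)
      exact ((hL_meas n).comp h1 :
        Measurable fun p : Fin (k + 1) → EuclideanSpace ℝ (Fin d) =>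
          Function.uncurry (L n) (p n.succ, p n.castSucc))
  -- the pushforward identity
  set μ : Measure (Fin (k + 1) → EuclideanSpace ℝ (Fin d)) :=
    volume.withDensity fun p => ENNReal.ofReal (w₀ p) with hμ
  set ν : Measure (EuclideanSpace ℝ (Fin d)) :=
    volume.withDensity fun x => ENNReal.ofReal (Pim (Fin.last k) x) with hν
  have hLofReal_meas : ∀ n : Fin k,
      Measurable (Function.uncurry fun y x => ENNReal.ofReal (L n y x)) :=
    fun n => ENNReal.measurable_ofReal.comp (hL_meas n)
  have hLofReal_int : ∀ (n : Fin k) y, ∫⁻ x, ENNReal.ofReal (L n y x) = 1 :=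
    fun n y => aux_lintegral_one (fun x => (hL_pos n y x).le) (hL_markov n y)
  have hmap : Measure.map (fun p : Fin (k + 1) → EuclideanSpace ℝ (Fin d) =>
      p (Fin.last k)) μ = ν := by
    ext s hs
    rw [Measure.map_apply (measurable_pi_apply (Fin.last k)) hs, hμ, hν,
      withDensity_apply _ (hs.preimage (measurable_pi_apply (Fin.last k))),
      withDensity_apply _ hs]
    rw [← lintegral_indicator (hs.preimage (measurable_pi_apply (Fin.last k))),
      ← lintegral_indicator hs]
    set g' : EuclideanSpace ℝ (Fin d) → ENNReal :=
      s.indicator fun x => ENNReal.ofReal (Pim (Fin.last k) x) with hg'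
    have hg'_meas : Measurable g' :=
      (ENNReal.measurable_ofReal.comp (hPim_meas (Fin.last k))).indicator hs
    have hpoint : ∀ p : Fin (k + 1) → EuclideanSpace ℝ (Fin d),
        ((fun p : Fin (k + 1) → EuclideanSpace ℝ (Fin d) => p (Fin.last k)) ⁻¹' s).indicator
          (fun p => ENNReal.ofReal (w₀ p)) p
        = g' (p (Fin.last k)) * ∏ n : Fin k, ENNReal.ofReal (L n (p n.succ) (p n.castSucc)) := by
      intro p
      have hsplit : (∏ n : Fin k, ENNReal.ofReal (L n (p n.succ) (p n.castSucc)))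
          = ENNReal.ofReal (∏ n : Fin k, L n (p n.succ) (p n.castSucc)) :=
        (ENNReal.ofReal_prod_of_nonneg fun n _ => (hL_pos n _ _).le).symm
      rw [hsplit]
      by_cases h : p (Fin.last k) ∈ s
      · rw [Set.indicator_of_mem (by exact h), hg', Set.indicator_of_mem h, hw₀]
        rw [ENNReal.ofReal_mul (hPim_pos _ _).le]
      · rw [Set.indicator_of_notMem (by exact h), hg', Set.indicator_of_notMem h, zero_mul]
    rw [lintegral_congr hpoint]
    exact aux_chain k (fun n y x => ENNReal.ofReal (L n y x)) hLofReal_meas hLofReal_int g' hg'_meas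
  -- transfer of Bochner integrals through μ
  have hμint : ∀ (ψ : EuclideanSpace ℝ (Fin d) → EuclideanSpace ℝ (Fin m)),
      Measurable ψ →
      (∫ p : Fin (k + 1) → EuclideanSpace ℝ (Fin d), w₀ p • ψ (p (Fin.last k)))
      = ∫ x, Pim (Fin.last k) x • ψ x := by
    intro ψ hψ
    have h1 : (∫ p : Fin (k + 1) → EuclideanSpace ℝ (Fin d), w₀ p • ψ (p (Fin.last k)))
        = ∫ p, ψ (p (Fin.last k)) ∂μ := by
      rw [hμ, show (volume.withDensity fun p => ENNReal.ofReal (w₀ p))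
          = volume.withDensity (fun p => ((w₀ p).toNNReal : ENNReal)) from rfl]
      rw [integral_withDensity_eq_integral_smul
        (by exact hw₀_meas.real_toNNReal : Measurable fun p => Real.toNNReal (w₀ p))]
      refine integral_congr_ae (ae_of_all _ fun p => ?_)
      simp only [NNReal.smul_def, Real.coe_toNNReal _ (hw₀_nonneg p)]
    have h2 : (∫ p, ψ (p (Fin.last k)) ∂μ)
        = ∫ x, ψ x ∂ν := by
      rw [← hmap, integral_map (measurable_pi_apply (Fin.last k)).aemeasurable
        hψ.aestronglyMeasurable]
    have h3 : (∫ x, ψ x ∂ν) = ∫ x, Pim (Fin.last k) x • ψ x := by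
      rw [hν, show (volume.withDensity fun x => ENNReal.ofReal (Pim (Fin.last k) x))
          = volume.withDensity (fun x => ((Pim (Fin.last k) x).toNNReal : ENNReal)) from rfl]
      rw [integral_withDensity_eq_integral_smul
        (by exact (hPim_meas (Fin.last k)).real_toNNReal :
          Measurable fun x => Real.toNNReal (Pim (Fin.last k) x))]
      refine integral_congr_ae (ae_of_all _ fun x => ?_)
      simp only [NNReal.smul_def, Real.coe_toNNReal _ (hPim_pos (Fin.last k) x).le]
    rw [h1, h2, h3]
  have hμint_sca :
      (∫ p : Fin (k + 1) → EuclideanSpace ℝ (Fin d), w₀ p)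
      = ∫ x, Pim (Fin.last k) x := by
    have h1 : (∫ p : Fin (k + 1) → EuclideanSpace ℝ (Fin d), w₀ p)
        = ∫ p, (1 : ℝ) ∂μ := by
      rw [hμ, show (volume.withDensity fun p => ENNReal.ofReal (w₀ p))
          = volume.withDensity (fun p => ((w₀ p).toNNReal : ENNReal)) from rfl]
      rw [integral_withDensity_eq_integral_smul
        (by exact hw₀_meas.real_toNNReal : Measurable fun p => Real.toNNReal (w₀ p))]
      refine integral_congr_ae (ae_of_all _ fun p => ?_)
      simp only [NNReal.smul_def, Real.coe_toNNReal _ (hw₀_nonneg p), smul_eq_mul, mul_one]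
    have h2 : (∫ p, (1 : ℝ) ∂μ) = ∫ x, (1 : ℝ) ∂ν := by
      rw [← hmap, integral_map (measurable_pi_apply (Fin.last k)).aemeasurable
        measurable_const.aestronglyMeasurable]
    have h3 : (∫ x, (1 : ℝ) ∂ν) = ∫ x, Pim (Fin.last k) x := by
      rw [hν, show (volume.withDensity fun x => ENNReal.ofReal (Pim (Fin.last k) x))
          = volume.withDensity (fun x => ((Pim (Fin.last k) x).toNNReal : ENNReal)) from rfl]
      rw [integral_withDensity_eq_integral_smul
        (by exact (hPim_meas (Fin.last k)).real_toNNReal :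
          Measurable fun x => Real.toNNReal (Pim (Fin.last k) x))]
      refine integral_congr_ae (ae_of_all _ fun x => ?_)
      simp only [NNReal.smul_def, Real.coe_toNNReal _ (hPim_pos (Fin.last k) x).le, smul_eq_mul, mul_one]
    rw [h1, h2, h3]
  -- main computations
  have hvec : (∫ p : Fin (k + 1) → EuclideanSpace ℝ (Fin d),
      (q p * ∏ n : Fin k, G n (p n.castSucc) (p n.succ)) • φ (p (Fin.last k)))
      = c⁻¹ • ∫ x, Pim (Fin.last k) x • φ x := by
    have heq : (fun p : Fin (k + 1) → EuclideanSpace ℝ (Fin d) =>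
        (q p * ∏ n : Fin k, G n (p n.castSucc) (p n.succ)) • φ (p (Fin.last k)))
        = fun p => c⁻¹ • (w₀ p • φ (p (Fin.last k))) := by
      funext p
      rw [hpt p, mul_smul]
    rw [heq, integral_smul, hμint φ hφ_meas]
  have hsca : (∫ p : Fin (k + 1) → EuclideanSpace ℝ (Fin d),
      q p * ∏ n : Fin k, G n (p n.castSucc) (p n.succ))
      = c⁻¹ * ∫ x, Pim (Fin.last k) x := by
    have heq : (fun p : Fin (k + 1) → EuclideanSpace ℝ (Fin d) =>
        q p * ∏ n : Fin k, G n (p n.castSucc) (p n.succ))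
        = fun p => c⁻¹ * w₀ p := by
      funext p; exact hpt p
    rw [heq, integral_const_mul, hμint_sca]
  refine ⟨hvec, ?_⟩
  rw [hvec, hsca, smul_smul]
  congr 1
  have hI : (0 : ℝ) < ∫ x, Pim (Fin.last k) x := hPim_ipos (Fin.last k)
  have hIne : (∫ x, Pim (Fin.last k) x) ≠ 0 := hI.ne'
  have hcne : c ≠ 0 := hc_pos.ne'
  field_simp
end
end

section
/- Fix k ≥ 1. Let θ₀,…,θ_{k−1} ∈ ℝ^{d_θ} and suppose that for each θ the unnormalised density Π_θ(x) = exp(−U_θ(x)) on ℝ^{d_x} satisfies Z_θ = ∫ exp(−U_θ(x)) dx < ∞. Let K₁,…,K_{k−1} and L₀,…,L_{k−2} be Markov kernels on ℝ^{d_x} with positive transition densities, let X₀ have density π_{θ₀} = Π_{θ₀}/Z_{θ₀}, let X_n | X_{n−1} ∼ K_n(X_{n−1},·), and define the weights by W₀ = 1 and W_n = W_{n−1} · Π_{θ_n}(X_n) L_{n−1}(X_n, X_{n−1}) / (Π_{θ_{n−1}}(X_{n−1}) K_n(X_{n−1}, X_n)). Let H: ℝ^{d_x} → ℝ^{d_θ}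 be measurable with the relevant expectations finite. Then E[H(X_{k−1}) W_{k−1}] / E[W_{k−1}] = ∫ H(x) π_{θ_{k−1}}(x) dx, where π_{θ_{k−1}} = Π_{θ_{k−1}}/Z_{θ_{k−1}}. In particular, if the loss ℓ: ℝ^{d_θ} → ℝ satisfies ∇ℓ(θ_{k−1}) = ∫ H(x) π_{θ_{k−1}}(x) dx, the ratio equals ∇ℓ(θ_{k−1}). -/
open MeasureTheory

noncomputable section

/-- Auxiliary: integrating out a backward Markov chain of kernels. -/
lemma smc_peel {α : Type*} [MeasureSpace α] [SigmaFinite (volume : Measure α)]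
    {E : Type*} [NormedAddCommGroup E] [NormedSpace ℝ E] [CompleteSpace E] :
    ∀ (j : ℕ) (L : Fin j → α → α → ℝ)
      (_ : ∀ n y, (∫ x, L n y x) = 1) (f : α → E)
      (_ : Integrable fun p : Fin (j + 1) → α =>
        (∏ n : Fin j, L n (p n.succ) (p n.castSucc)) • f (p (Fin.last j))),
      (∫ p : Fin (j + 1) → α,
          (∏ n : Fin j, L n (p n.succ) (p n.castSucc)) • f (p (Fin.last j)))
        = ∫ x, f x := by
  intro j
  induction j with
  | zero =>
    intro L hM f hint
    simp only [Finset.univ_eq_empty, Finset.prod_empty, one_smul]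
    exact (volume_preserving_funUnique (Fin 1) α).integral_comp
      (MeasurableEquiv.measurableEmbedding _) f
  | succ j ih =>
    intro L hM f hint
    set e := MeasurableEquiv.piFinSuccAbove (fun _ : Fin (j + 2) => α) 0 with he
    have mp := measurePreserving_piFinSuccAbove (fun _ : Fin (j + 2) => (volume : Measure α)) 0
    set ν : Measure (Fin (j + 1) → α) :=
      Measure.pi fun i => (volume : Measure α) with hν
    set G : (Fin (j + 2) → α) → E := fun p =>
      (∏ n : Fin (j + 1), L n (p n.succ) (p n.castSucc)) • f (p (Fin.last (j + 1))) with hG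
    have hcons : ∀ (x : α) (t : Fin (j + 1) → α),
        G (e.symm (x, t)) = (L 0 (t 0) x) •
          ((∏ n : Fin j, L n.succ (t n.succ) (t n.castSucc)) • f (t (Fin.last j))) := by
      intro x t
      have hes : e.symm (x, t) = Fin.cons x t := by
        simp [he, MeasurableEquiv.piFinSuccAbove_symm_apply, Fin.insertNthEquiv,
          Fin.insertNth_zero]
      rw [hes, hG]
      simp only [Fin.prod_univ_succ, ← Fin.succ_castSucc, ← Fin.succ_last,
        Fin.cons_succ, Fin.castSucc_zero, Fin.cons_zero, mul_smul]
    have hintpi : Integrable G (Measure.pi fun _ : Fin (j + 2) => (volume : Measure α)) := by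
      rw [← volume_pi]; exact hint
    have hG' : Integrable (fun z : α × (Fin (j + 1) → α) => G (e.symm z))
        ((volume : Measure α).prod ν) := by
      have := ((mp.symm).integrable_comp_emb (MeasurableEquiv.measurableEmbedding e.symm)
        (g := G)).mpr hintpi
      exact this
    have h1 : (∫ p : Fin (j + 2) → α, G p)
        = ∫ z : α × (Fin (j + 1) → α), G (e.symm z) ∂((volume : Measure α).prod ν) := by
      rw [volume_pi]
      exact ((mp.symm).integral_comp (MeasurableEquiv.measurableEmbedding e.symm) G).symm
    have hinner : ∀ t : Fin (j + 1) → α,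
        (∫ x, G (e.symm (x, t)))
          = (∏ n : Fin j, L n.succ (t n.succ) (t n.castSucc)) • f (t (Fin.last j)) := by
      intro t
      simp only [hcons]
      rw [integral_smul_const, hM 0 (t 0), one_smul]
    have hint2 : Integrable (fun t : Fin (j + 1) → α =>
        (∏ n : Fin j, L n.succ (t n.succ) (t n.castSucc)) • f (t (Fin.last j))) ν := by
      have := hG'.integral_prod_right
      refine this.congr (Filter.Eventually.of_forall fun t => ?_)
      exact hinner t
    have hint2' : Integrable (fun t : Fin (j + 1) → α =>
        (∏ n : Fin j, L n.succ (t n.succ) (t n.castSucc)) • f (t (Fin.last j)))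
        (volume : Measure (Fin (j + 1) → α)) := by
      rw [volume_pi]; exact hint2
    calc (∫ p : Fin (j + 2) → α, G p)
        = ∫ z : α × (Fin (j + 1) → α), G (e.symm z) ∂((volume : Measure α).prod ν) := h1
      _ = ∫ t, ∫ x, G (e.symm (x, t)) ∂(volume : Measure α) ∂ν :=
          integral_prod_symm _ hG'
      _ = ∫ t, (∏ n : Fin j, L n.succ (t n.succ) (t n.castSucc)) • f (t (Fin.last j)) ∂ν := by
          exact integral_congr_ae (Filter.Eventually.of_forall fun t => hinner t)
      _ = ∫ t : Fin (j + 1) → α,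
            (∏ n : Fin j, L n.succ (t n.succ) (t n.castSucc)) • f (t (Fin.last j)) := by
          rw [volume_pi]
      _ = ∫ x, f x := ih (fun n => L n.succ) (fun n y => hM n.succ y) f hint2'

/-- Exact gradient recovery for the idealised SMC scheme: with `k = j + 1 ≥ 1`,
parameters `θ₀,…,θ_j`, chain `X₀ ∼ π_{θ₀}`, `Xₙ ∼ Kₙ(Xₙ₋₁,·)`, and weights
`W_j = ∏ₙ G_n`, the self-normalised weighted expectation of `H` equals
`∫ H dπ_{θ_j}`, and in particular equals `∇ℓ(θ_j)` when the latter has this form. -/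
theorem smc_exact_gradient_recovery
    {dx dθ j : ℕ}
    (U : EuclideanSpace ℝ (Fin dθ) → EuclideanSpace ℝ (Fin dx) → ℝ)
    (hU_meas : ∀ t, Measurable (U t))
    (hZ : ∀ t, Integrable fun x => Real.exp (-U t x))
    (θ : Fin (j + 1) → EuclideanSpace ℝ (Fin dθ))
    (K L : Fin j → EuclideanSpace ℝ (Fin dx) → EuclideanSpace ℝ (Fin dx) → ℝ)
    (hK_meas : ∀ n, Measurable (Function.uncurry (K n)))
    (hL_meas : ∀ n, Measurable (Function.uncurry (L n)))
    (hK_pos : ∀ n x y, 0 < K n x y)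
    (hL_pos : ∀ n x y, 0 < L n x y)
    (hK_markov : ∀ n x, (∫ y, K n x y) = 1)
    (hL_markov : ∀ n y, (∫ x, L n y x) = 1)
    (H : EuclideanSpace ℝ (Fin dx) → EuclideanSpace ℝ (Fin dθ))
    (hH_meas : Measurable H)
    (q : (Fin (j + 1) → EuclideanSpace ℝ (Fin dx)) → ℝ)
    (hq : ∀ p, q p =
      Real.exp (-U (θ 0) (p 0)) / (∫ x, Real.exp (-U (θ 0) x)) *
        ∏ n : Fin j, K n (p n.castSucc) (p n.succ))
    (W : (Fin (j + 1) → EuclideanSpace ℝ (Fin dx)) → ℝ)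
    (hW : ∀ p, W p = ∏ n : Fin j,
      Real.exp (-U (θ n.succ) (p n.succ)) * L n (p n.succ) (p n.castSucc) /
        (Real.exp (-U (θ n.castSucc) (p n.castSucc)) * K n (p n.castSucc) (p n.succ)))
    (hint_vec : Integrable fun p : Fin (j + 1) → EuclideanSpace ℝ (Fin dx) =>
      (q p * W p) • H (p (Fin.last j)))
    (hint_sca : Integrable fun p : Fin (j + 1) → EuclideanSpace ℝ (Fin dx) => q p * W p)
    (hH_int : Integrable fun x => Real.exp (-U (θ (Fin.last j)) x) • H x)
    (ℓ : EuclideanSpace ℝ (Fin dθ) → ℝ)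
    (hgrad : gradient ℓ (θ (Fin.last j)) =
      (∫ x, Real.exp (-U (θ (Fin.last j)) x))⁻¹ •
        ∫ x, Real.exp (-U (θ (Fin.last j)) x) • H x) :
    (∫ p : Fin (j + 1) → EuclideanSpace ℝ (Fin dx), q p * W p)⁻¹ •
      (∫ p : Fin (j + 1) → EuclideanSpace ℝ (Fin dx), (q p * W p) • H (p (Fin.last j)))
      = (∫ x, Real.exp (-U (θ (Fin.last j)) x))⁻¹ •
          ∫ x, Real.exp (-U (θ (Fin.last j)) x) • H x ∧
    (∫ p : Fin (j + 1) → EuclideanSpace ℝ (Fin dx), q p * W p)⁻¹ •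
      (∫ p : Fin (j + 1) → EuclideanSpace ℝ (Fin dx), (q p * W p) • H (p (Fin.last j)))
      = gradient ℓ (θ (Fin.last j)) := by
  set Z₀ : ℝ := ∫ x, Real.exp (-U (θ 0) x) with hZ₀def
  set ZL : ℝ := ∫ x, Real.exp (-U (θ (Fin.last j)) x) with hZLdef
  -- positivity of normalising constants
  have hZpos : ∀ t, 0 < ∫ x : EuclideanSpace ℝ (Fin dx), Real.exp (-U t x) := by
    intro t
    rw [integral_pos_iff_support_of_nonneg
      (fun x => (Real.exp_pos _).le) (hZ t)]
    have : Function.support (fun x : EuclideanSpace ℝ (Fin dx) => Real.exp (-U t x)) = Set.univ := by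
      ext x; simp [Real.exp_ne_zero]
    rw [this]
    exact isOpen_univ.measure_pos volume Set.univ_nonempty
  have hZ₀pos : 0 < Z₀ := hZpos (θ 0)
  have hZLpos : 0 < ZL := hZpos (θ (Fin.last j))
  -- pointwise simplification of q * W
  have hqW : ∀ p : Fin (j + 1) → EuclideanSpace ℝ (Fin dx), q p * W p =
      Z₀⁻¹ * ((∏ n : Fin j, L n (p n.succ) (p n.castSucc)) *
        Real.exp (-U (θ (Fin.last j)) (p (Fin.last j)))) := by
    intro p
    have key : Real.exp (-U (θ 0) (p 0)) *
        (∏ n : Fin j, Real.exp (-U (θ n.succ) (p n.succ)))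
        = (∏ n : Fin j, Real.exp (-U (θ n.castSucc) (p n.castSucc))) *
          Real.exp (-U (θ (Fin.last j)) (p (Fin.last j))) := by
      have h1 := Fin.prod_univ_succ (fun n : Fin (j + 1) => Real.exp (-U (θ n) (p n)))
      have h2 := Fin.prod_univ_castSucc (fun n : Fin (j + 1) => Real.exp (-U (θ n) (p n)))
      exact h1.symm.trans h2
    have hPK : (∏ n : Fin j, K n (p n.castSucc) (p n.succ)) ≠ 0 :=
      (Finset.prod_pos fun n _ => hK_pos n _ _).ne'
    have hPC : (∏ n : Fin j, Real.exp (-U (θ n.castSucc) (p n.castSucc))) ≠ 0 :=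
      (Finset.prod_pos fun n _ => Real.exp_pos _).ne'
    rw [hq p, hW p]
    rw [Finset.prod_div_distrib, Finset.prod_mul_distrib, Finset.prod_mul_distrib]
    field_simp
    linear_combination (∏ n : Fin j, L n (p n.succ) (p n.castSucc)) * key
  -- rewrite both integrals via the peel lemma
  have hqW_vec : ∀ p : Fin (j + 1) → EuclideanSpace ℝ (Fin dx), (q p * W p) • H (p (Fin.last j)) =
      Z₀⁻¹ • ((∏ n : Fin j, L n (p n.succ) (p n.castSucc)) •
        (Real.exp (-U (θ (Fin.last j)) (p (Fin.last j))) • H (p (Fin.last j)))) := by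
    intro p; rw [hqW p, mul_smul, mul_smul]
  have hqW_sca : ∀ p : Fin (j + 1) → EuclideanSpace ℝ (Fin dx), q p * W p =
      Z₀⁻¹ • ((∏ n : Fin j, L n (p n.succ) (p n.castSucc)) •
        (Real.exp (-U (θ (Fin.last j)) (p (Fin.last j))))) := by
    intro p; rw [hqW p]; simp [smul_eq_mul, mul_assoc]
  have hint_vec' : Integrable fun p : Fin (j + 1) → EuclideanSpace ℝ (Fin dx) =>
      (∏ n : Fin j, L n (p n.succ) (p n.castSucc)) •
        (Real.exp (-U (θ (Fin.last j)) (p (Fin.last j))) • H (p (Fin.last j))) := by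
    have h := hint_vec.congr (Filter.Eventually.of_forall fun p => (hqW_vec p))
    have := (integrable_smul_iff (c := Z₀⁻¹) (inv_ne_zero hZ₀pos.ne') _).mp h
    exact this
  have hint_sca' : Integrable fun p : Fin (j + 1) → EuclideanSpace ℝ (Fin dx) =>
      (∏ n : Fin j, L n (p n.succ) (p n.castSucc)) •
        (Real.exp (-U (θ (Fin.last j)) (p (Fin.last j)))) := by
    have h := hint_sca.congr (Filter.Eventually.of_forall fun p => (hqW_sca p))
    have := (integrable_smul_iff (c := Z₀⁻¹) (inv_ne_zero hZ₀pos.ne') _).mp h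
    exact this
  have hnum : (∫ p : Fin (j + 1) → EuclideanSpace ℝ (Fin dx), (q p * W p) • H (p (Fin.last j)))
      = Z₀⁻¹ • ∫ x, Real.exp (-U (θ (Fin.last j)) x) • H x := by
    rw [integral_congr_ae (Filter.Eventually.of_forall fun p => hqW_vec p), integral_smul]
    congr 1
    exact smc_peel j L hL_markov (fun x => Real.exp (-U (θ (Fin.last j)) x) • H x) hint_vec'
  have hden : (∫ p : Fin (j + 1) → EuclideanSpace ℝ (Fin dx), q p * W p) = Z₀⁻¹ * ZL := by
    rw [integral_congr_ae (Filter.Eventually.of_forall fun p => hqW_sca p), integral_smul]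
    rw [smc_peel j L hL_markov (fun x => Real.exp (-U (θ (Fin.last j)) x)) hint_sca']
    simp [smul_eq_mul, hZLdef]
  have hmain : (∫ p : Fin (j + 1) → EuclideanSpace ℝ (Fin dx), q p * W p)⁻¹ •
      (∫ p : Fin (j + 1) → EuclideanSpace ℝ (Fin dx), (q p * W p) • H (p (Fin.last j)))
      = ZL⁻¹ • ∫ x, Real.exp (-U (θ (Fin.last j)) x) • H x := by
    rw [hnum, hden, smul_smul]
    congr 1
    field_simp
  exact ⟨hmain, hmain.trans hgrad.symm⟩
end
end

section
/- Let π_θ(x) = exp(−U_θ(x))/Z_θ be a family of probability densities on ℝ^{d_x}, where for every x the map θ ↦ U_θ(x) is twice continuously differentiable. Let ℓ: ℝ^{d_θ} → ℝ be differentiable, fix θ_{k−1} with ‖∇ℓ(θ_{k−1})‖₂ = L, and set θ_k = θ_{k−1} − γ∇ℓ(θ_{k−1}) for γ > 0. Suppose there exist a radius r > 0, a measurable vector function S₁: ℝ^{d_x} → ℝ^{d_θ} and a measurable symmetric-matrix function S₂: ℝ^{d_x} → ℝ^{d_θ×d_θ} such that, for every x and every θ ∈ B_{θ_{k−1}}(r),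 the componentwise bounds |∇_θU_θ(x)| ≤ S₁(x) and ∇_θ∇_θᵀU_θ(x) ⪯ S₂(x) (Loewner order) hold, and such that E_{π_{θ_{k−1}}}[exp(λᵀS₁(x))] < ∞ and E_{π_{θ_{k−1}}}[exp(λᵀS₂(x)λ)] < ∞ for all λ in a neighbourhood of 0 in ℝ^{d_θ}. Then, as γ → 0, χ²(π_{θ_k} ‖ π_{θ_{k−1}}) ≤ √(γ² ∇ℓ(θ_{k−1})ᵀ I_{θ_{k−1}} ∇ℓ(θ_{k−1})) + O(γ^{3/2}), where I_{θ_{k−1}} = E_{π_{θ_{k−1}}}[ ∇_θU_{θ_{k−1}}(x) ∇_θU_{θ_{k−1}}(x)ᵀ ]. -/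
open MeasureTheory Asymptotics Topology
open scoped RealInnerProductSpace

noncomputable section

/-- The Gibbs probability density `π_θ(x) = exp(−U_θ(x))/Z_θ`. -/
def gibbsDensity {dx dθ : ℕ}
    (U : EuclideanSpace ℝ (Fin dθ) → EuclideanSpace ℝ (Fin dx) → ℝ)
    (t : EuclideanSpace ℝ (Fin dθ)) (x : EuclideanSpace ℝ (Fin dx)) : ℝ :=
  Real.exp (-U t x) / ∫ y, Real.exp (-U t y)

/-- The chi-square divergence `χ²(p ‖ q) = ∫ (p/q − 1)² q`. -/
def chiSqDiv {dx : ℕ} (p q : EuclideanSpace ℝ (Fin dx) → ℝ) : ℝ :=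
  ∫ x, (p x / q x - 1) ^ 2 * q x

lemma aux_abs_exp_sub_one (t : ℝ) : |Real.exp t - 1| ≤ |t| * Real.exp |t| := by
  rcases le_or_gt 0 t with h | h
  · rw [abs_of_nonneg h,
      abs_of_nonneg (by nlinarith [Real.add_one_le_exp t] : (0:ℝ) ≤ Real.exp t - 1)]
    nlinarith [Real.add_one_le_exp (-t), Real.exp_pos t,
      (by rw [← Real.exp_add]; simp : Real.exp t * Real.exp (-t) = 1)]
  · rw [abs_of_neg h,
      abs_of_nonpos (by linarith [Real.exp_le_one_iff.mpr h.le] : Real.exp t - 1 ≤ 0)]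
    have h1 := Real.add_one_le_exp t
    have h2 : (1:ℝ) ≤ Real.exp (-t) := Real.one_le_exp (by linarith)
    nlinarith

lemma aux_sq_le_exp (c x : ℝ) (hc : 0 < c) (hx : 0 ≤ x) :
    x ^ 2 ≤ 4 / c ^ 2 * Real.exp (c * x) := by
  have h1 := Real.add_one_le_exp (c * x / 2)
  have h2 : Real.exp (c*x/2) * Real.exp (c*x/2) = Real.exp (c*x) := by
    rw [← Real.exp_add]; ring_nf
  have hcx : 0 ≤ c * x := by positivity
  rw [div_mul_eq_mul_div, le_div_iff₀ (by positivity)]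
  nlinarith [Real.exp_pos (c*x/2)]

lemma aux_le_exp (x : ℝ) : x ≤ Real.exp x := by linarith [Real.add_one_le_exp x]

set_option maxHeartbeats 1000000

/-- Chi-square bound under locally dominated gradient/Hessian with exponential moments:
`χ²(π_{θ_k} ‖ π_{θ_{k−1}}) ≤ √(γ² ∇ℓᵀ I ∇ℓ) + O(γ^{3/2})` as `γ → 0⁺`. -/
theorem chi_square_divergence_bound_dominated
    {dx dθ : ℕ}
    (U : EuclideanSpace ℝ (Fin dθ) → EuclideanSpace ℝ (Fin dx) → ℝ)
    (hZ : ∀ t, Integrable fun x => Real.exp (-U t x))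
    (hU2 : ∀ x, ContDiff ℝ 2 fun t => U t x)
    (ℓ : EuclideanSpace ℝ (Fin dθ) → ℝ) (hℓ : Differentiable ℝ ℓ)
    (θp : EuclideanSpace ℝ (Fin dθ)) (Lc : ℝ)
    (hLc : ‖gradient ℓ θp‖ = Lc)
    (r : ℝ) (hr : 0 < r)
    (S₁ : EuclideanSpace ℝ (Fin dx) → EuclideanSpace ℝ (Fin dθ))
    (S₂ : EuclideanSpace ℝ (Fin dx) → Matrix (Fin dθ) (Fin dθ) ℝ)
    (hS₁_meas : Measurable S₁) (hS₂_meas : ∀ i j, Measurable fun x => S₂ x i j)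
    (hS₂_symm : ∀ x, (S₂ x).IsSymm)
    (hS₁_dom : ∀ x, ∀ t ∈ Metric.closedBall θp r, ∀ i,
      |gradient (fun s => U s x) t i| ≤ S₁ x i)
    (hS₂_dom : ∀ x, ∀ t ∈ Metric.closedBall θp r, ∀ v : EuclideanSpace ℝ (Fin dθ),
      ⟪v, fderiv ℝ (fun s => gradient (fun s' => U s' x) s) t v⟫ ≤
        ∑ i, ∑ j, v i * S₂ x i j * v j)
    (hexp : ∃ ε > (0 : ℝ), ∀ lam : EuclideanSpace ℝ (Fin dθ), ‖lam‖ < ε →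
      Integrable (fun x => Real.exp (∑ i, lam i * S₁ x i) * gibbsDensity U θp x) ∧
      Integrable (fun x =>
        Real.exp (∑ i, ∑ j, lam i * S₂ x i j * lam j) * gibbsDensity U θp x)) :
    ∃ C : ℝ, ∀ᶠ γ in 𝓝[>] (0 : ℝ),
      chiSqDiv (gibbsDensity U (θp - γ • gradient ℓ θp)) (gibbsDensity U θp) ≤
        Real.sqrt (γ ^ 2 * ∫ x, ⟪gradient ℓ θp, gradient (fun s => U s x) θp⟫ ^ 2 *
            gibbsDensity U θp x) + C * γ ^ ((3 : ℝ) / 2) := by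
  classical
  obtain ⟨ε, hε, hint⟩ := hexp
  set g := gradient ℓ θp with hgdef
  set L := ‖g‖ with hLdef
  have hL0 : 0 ≤ L := norm_nonneg _
  set q := gibbsDensity U θp with hqdef
  set Zp := ∫ x, Real.exp (-U θp x) with hZpdef
  have hq_def : ∀ x, q x = Real.exp (-U θp x) / Zp := fun x => rfl
  have hZp_pos : 0 < Zp := by
    rw [hZpdef]
    rw [integral_pos_iff_support_of_nonneg (fun x => (Real.exp_pos _).le) (hZ θp)]
    have : Function.support (fun x : EuclideanSpace ℝ (Fin dx) => Real.exp (-U θp x)) =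
        Set.univ := by
      ext x; simp [Real.exp_ne_zero]
    rw [this]
    exact isOpen_univ.measure_pos volume ⟨0, trivial⟩
  have hq_pos : ∀ x, 0 < q x := fun x => div_pos (Real.exp_pos _) hZp_pos
  have hq_int : Integrable q := (hZ θp).div_const Zp
  have hq_aesm : AEStronglyMeasurable q := hq_int.aestronglyMeasurable
  have hq_one : ∫ x, q x = 1 := by
    simp only [hq_def]
    rw [integral_div, div_self hZp_pos.ne']
  -- the dominating function M
  set M : EuclideanSpace ℝ (Fin dx) → ℝ := fun x => ∑ i, |g i| * S₁ x i with hMdef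
  have hS₁_nonneg : ∀ x i, 0 ≤ S₁ x i := fun x i =>
    (abs_nonneg _).trans (hS₁_dom x θp (Metric.mem_closedBall_self hr.le) i)
  have hM_nonneg : ∀ x, 0 ≤ M x := fun x =>
    Finset.sum_nonneg fun i _ => mul_nonneg (abs_nonneg _) (hS₁_nonneg x i)
  have hM_meas : Measurable M := by
    apply Finset.measurable_sum
    intro i _
    exact measurable_const.mul ((measurable_pi_apply i).comp ((WithLp.measurable_ofLp _ _).comp hS₁_meas))
  -- exponential moments of M
  have hexpM : ∀ c : ℝ, |c| * L < ε →
      Integrable (fun x => Real.exp (c * M x) * q x) := by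
    intro c hc
    set lam : EuclideanSpace ℝ (Fin dθ) :=
      (WithLp.equiv 2 (Fin dθ → ℝ)).symm (fun i => c * |g i|) with hlamdef
    have hnorm : ‖lam‖ = |c| * L := by
      rw [hlamdef, hLdef, EuclideanSpace.norm_eq, EuclideanSpace.norm_eq,
        ← Real.sqrt_sq (abs_nonneg c), ← Real.sqrt_mul (sq_nonneg _)]
      congr 1
      rw [Finset.mul_sum]
      refine Finset.sum_congr rfl fun i _ => ?_
      rw [WithLp.equiv_symm_apply, PiLp.toLp_apply]
      simp [abs_mul, mul_pow, sq_abs]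
    have hlt : ‖lam‖ < ε := by rw [hnorm]; exact hc
    have h1 := (hint lam hlt).1
    have heq : (fun x => Real.exp (∑ i, lam i * S₁ x i) * q x)
        = fun x => Real.exp (c * M x) * q x := by
      funext x
      congr 2
      rw [hMdef, Finset.mul_sum]
      refine Finset.sum_congr rfl fun i _ => ?_
      rw [hlamdef, WithLp.equiv_symm_apply, PiLp.toLp_apply]
      ring
    exact heq ▸ h1
  -- MVT bound
  have key : ∀ γ : ℝ, 0 ≤ γ → γ * L ≤ r → ∀ x,
      |U (θp - γ • g) x - U θp x| ≤ γ * M x := by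
    intro γ hγ0 hγr x
    have hdf : Differentiable ℝ (fun s => U s x) := (hU2 x).differentiable two_ne_zero
    have hmem : ∀ s ∈ Set.Icc (0:ℝ) γ, θp - s • g ∈ Metric.closedBall θp r := by
      intro s hs
      rw [Metric.mem_closedBall, dist_eq_norm]
      have : θp - s • g - θp = -(s • g) := by abel
      rw [this, norm_neg, norm_smul, Real.norm_eq_abs, abs_of_nonneg hs.1]
      calc s * ‖g‖ ≤ γ * ‖g‖ := by
            exact mul_le_mul_of_nonneg_right hs.2 (norm_nonneg _)
        _ ≤ r := hγr
    have hderiv : ∀ s ∈ Set.Icc (0:ℝ) γ,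
        HasDerivWithinAt (fun s : ℝ => U (θp - s • g) x)
          (fderiv ℝ (fun s => U s x) (θp - s • g) (-g)) (Set.Icc 0 γ) s := by
      intro s _
      have h1 : HasDerivAt (fun s : ℝ => θp - s • g) (-g) s := by
        simpa using ((hasDerivAt_id s).smul_const g).const_sub θp
      exact ((hdf _).hasFDerivAt.comp_hasDerivAt s h1).hasDerivWithinAt
    have hbound : ∀ s ∈ Set.Ico (0:ℝ) γ,
        ‖fderiv ℝ (fun s => U s x) (θp - s • g) (-g)‖ ≤ M x := by
      intro s hs
      have hmem' := hmem s ⟨hs.1, hs.2.le⟩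
      have hgrad : fderiv ℝ (fun s => U s x) (θp - s • g) (-g)
          = ⟪gradient (fun s => U s x) (θp - s • g), -g⟫ := by
        have h := (hdf (θp - s • g)).hasGradientAt
        rw [(hasGradientAt_iff_hasFDerivAt.mp h).fderiv]
        simp [InnerProductSpace.toDual_apply_apply]
      rw [hgrad, Real.norm_eq_abs, inner_neg_right, abs_neg]
      have hinner : ⟪gradient (fun s => U s x) (θp - s • g), g⟫
          = ∑ i, gradient (fun s => U s x) (θp - s • g) i * g i := by
        rw [PiLp.inner_apply]
        exact Finset.sum_congr rfl fun i _ => by simp [RCLike.inner_apply, mul_comm]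
      rw [hinner, hMdef]
      calc |∑ i, gradient (fun s => U s x) (θp - s • g) i * g i|
          ≤ ∑ i, |gradient (fun s => U s x) (θp - s • g) i * g i| :=
            Finset.abs_sum_le_sum_abs _ _
        _ ≤ ∑ i, |g i| * S₁ x i := by
            refine Finset.sum_le_sum fun i _ => ?_
            rw [abs_mul, mul_comm]
            exact mul_le_mul_of_nonneg_left (hS₁_dom x _ hmem' i) (abs_nonneg _)
    have := norm_image_sub_le_of_norm_deriv_le_segment' hderiv hbound γ
      (Set.right_mem_Icc.2 hγ0)
    simpa [Real.norm_eq_abs, mul_comm] using this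
  -- choice of radius δ₀
  set δ₀ : ℝ := min 1 (min (r / (L + 1)) (ε / (3 * (L + 1)))) with hδ₀def
  have hδ₀_pos : 0 < δ₀ := lt_min one_pos (lt_min (by positivity) (by positivity))
  have hδ₀_le_one : δ₀ ≤ 1 := min_le_left _ _
  have hδ₀r : ∀ γ : ℝ, 0 ≤ γ → γ ≤ δ₀ → γ * L ≤ r := by
    intro γ h0 h1
    have h2 : γ ≤ r / (L + 1) := h1.trans ((min_le_right _ _).trans (min_le_left _ _))
    calc γ * L ≤ (r / (L + 1)) * L := mul_le_mul_of_nonneg_right h2 hL0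
      _ ≤ r := by
          rw [div_mul_eq_mul_div, div_le_iff₀ (by linarith)]
          nlinarith
  have hδ₀ε : ∀ c : ℝ, 0 ≤ c → c ≤ 3 * δ₀ → |c| * L < ε := by
    intro c h0 h1
    have h2 : δ₀ ≤ ε / (3 * (L + 1)) := (min_le_right _ _).trans (min_le_right _ _)
    have hA : 0 < ε / (3 * (L + 1)) := by positivity
    have hAe : (ε / (3 * (L + 1))) * (3 * (L + 1)) = ε := by field_simp
    rw [abs_of_nonneg h0]
    nlinarith
  have hK₀_int : Integrable (fun x => Real.exp (3 * δ₀ * M x) * q x) :=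
    hexpM (3 * δ₀) (hδ₀ε (3 * δ₀) (by positivity) le_rfl)
  set K₀ := ∫ x, Real.exp (3 * δ₀ * M x) * q x with hK₀def
  have hK₀_nonneg : 0 ≤ K₀ :=
    integral_nonneg fun x => mul_nonneg (Real.exp_pos _).le (hq_pos x).le
  set K' := 4 / δ₀ ^ 2 * K₀ with hK'def
  set K₂ := K₀ / δ₀ with hK₂def
  have hK'_nonneg : 0 ≤ K' := by positivity
  have hK₂_nonneg : 0 ≤ K₂ := by positivity
  set δ := min δ₀ (1 / (2 * K₂ + 1)) with hδdef
  have hδ_pos : 0 < δ := lt_min hδ₀_pos (by positivity)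
  refine ⟨8 * K' + 8 * K₂ ^ 2, ?_⟩
  filter_upwards [Ioo_mem_nhdsGT_of_mem (Set.left_mem_Ico.mpr hδ_pos)] with γ hγ
  obtain ⟨hγ0, hγδ⟩ := hγ
  have hγδ₀ : γ ≤ δ₀ := hγδ.le.trans (min_le_left _ _)
  have hγ1 : γ ≤ 1 := hγδ₀.trans hδ₀_le_one
  set θk := θp - γ • g with hθkdef
  set X : EuclideanSpace ℝ (Fin dx) → ℝ := fun x => Real.exp (U θp x - U θk x) with hXdef
  have hΔ : ∀ x, |U θk x - U θp x| ≤ γ * M x := fun x =>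
    key γ hγ0.le (hδ₀r γ hγ0.le hγδ₀) x
  have hX_pos : ∀ x, 0 < X x := fun x => Real.exp_pos _
  have hU_aem : ∀ t, Integrable (fun x => Real.exp (-U t x)) →
      AEMeasurable (fun x => U t x) := by
    intro t ht
    have h1 := Real.measurable_log.comp_aemeasurable ht.aestronglyMeasurable.aemeasurable
    have h1' : AEMeasurable (fun x => -U t x) := by
      simpa [Function.comp_def, Real.log_exp] using h1
    exact h1'.neg.congr (Filter.Eventually.of_forall fun x => by simp)
  have hX_aesm : AEStronglyMeasurable X := by
    have h1 := hU_aem θk (hZ θk)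
    have h2 := hU_aem θp (hZ θp)
    exact (Real.measurable_exp.comp_aemeasurable (h2.sub h1)).aestronglyMeasurable
  have hXb : ∀ x, X x ≤ Real.exp (γ * M x) := by
    intro x
    apply Real.exp_le_exp.mpr
    have h := abs_le.mp (hΔ x)
    linarith [h.1]
  have hX1 : ∀ x, |X x - 1| ≤ γ * M x * Real.exp (γ * M x) := by
    intro x
    refine (aux_abs_exp_sub_one _).trans ?_
    have h1 : |U θp x - U θk x| ≤ γ * M x := by rw [abs_sub_comm]; exact hΔ x
    exact mul_le_mul h1 (Real.exp_le_exp.mpr h1) (Real.exp_pos _).le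
      (mul_nonneg hγ0.le (hM_nonneg x))
  have hXq_int : Integrable (fun x => X x * q x) := by
    refine (hexpM γ (hδ₀ε γ hγ0.le (by linarith))).mono' (hX_aesm.mul hq_aesm) ?_
    refine Filter.Eventually.of_forall fun x => ?_
    rw [Real.norm_eq_abs, abs_of_nonneg (mul_nonneg (hX_pos x).le (hq_pos x).le)]
    exact mul_le_mul_of_nonneg_right (hXb x) (hq_pos x).le
  have hMexp : ∀ x, M x ≤ Real.exp (δ₀ * M x) / δ₀ := by
    intro x
    rw [le_div_iff₀ hδ₀_pos, mul_comm]
    exact aux_le_exp _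
  have habs_bound : ∀ x, |X x - 1| ≤ γ / δ₀ * Real.exp (3 * δ₀ * M x) := by
    intro x
    refine (hX1 x).trans ?_
    have h1 : Real.exp (γ * M x) ≤ Real.exp (δ₀ * M x) :=
      Real.exp_le_exp.mpr (mul_le_mul_of_nonneg_right hγδ₀ (hM_nonneg x))
    have h2 : Real.exp (δ₀ * M x) * Real.exp (δ₀ * M x) ≤ Real.exp (3 * δ₀ * M x) := by
      rw [← Real.exp_add]
      refine Real.exp_le_exp.mpr ?_
      have h0 : (3:ℝ) * δ₀ * M x = 3 * (δ₀ * M x) := by ring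
      rw [h0]
      linarith [mul_nonneg hδ₀_pos.le (hM_nonneg x)]
    calc γ * M x * Real.exp (γ * M x)
        ≤ γ * (Real.exp (δ₀ * M x) / δ₀) * Real.exp (δ₀ * M x) := by
          refine mul_le_mul ?_ h1 (Real.exp_pos _).le ?_
          · exact mul_le_mul_of_nonneg_left (hMexp x) hγ0.le
          · positivity
      _ = γ / δ₀ * (Real.exp (δ₀ * M x) * Real.exp (δ₀ * M x)) := by ring
      _ ≤ γ / δ₀ * Real.exp (3 * δ₀ * M x) := by
          exact mul_le_mul_of_nonneg_left h2 (by positivity)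
  have hsq_bound : ∀ x, (X x - 1) ^ 2 ≤ γ ^ 2 * (4 / δ₀ ^ 2) * Real.exp (3 * δ₀ * M x) := by
    intro x
    rw [← sq_abs]
    refine (pow_le_pow_left₀ (abs_nonneg _) (hX1 x) 2).trans ?_
    have h2 : M x ^ 2 ≤ 4 / δ₀ ^ 2 * Real.exp (δ₀ * M x) :=
      aux_sq_le_exp δ₀ (M x) hδ₀_pos (hM_nonneg x)
    have h3 : Real.exp (γ * M x) ^ 2 ≤ Real.exp (2 * δ₀ * M x) := by
      rw [sq, ← Real.exp_add]
      refine Real.exp_le_exp.mpr ?_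
      have h0 : (2:ℝ) * δ₀ * M x = δ₀ * M x + δ₀ * M x := by ring
      rw [h0]
      have := mul_le_mul_of_nonneg_right hγδ₀ (hM_nonneg x)
      linarith
    have h4 : Real.exp (δ₀ * M x) * Real.exp (2 * δ₀ * M x) = Real.exp (3 * δ₀ * M x) := by
      rw [← Real.exp_add]; ring_nf
    calc (γ * M x * Real.exp (γ * M x)) ^ 2
        = γ ^ 2 * (M x ^ 2 * Real.exp (γ * M x) ^ 2) := by ring
      _ ≤ γ ^ 2 * ((4 / δ₀ ^ 2 * Real.exp (δ₀ * M x)) * Real.exp (2 * δ₀ * M x)) := by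
          refine mul_le_mul_of_nonneg_left ?_ (sq_nonneg γ)
          refine mul_le_mul h2 h3 (sq_nonneg _) (by positivity)
      _ = γ ^ 2 * (4 / δ₀ ^ 2) * (Real.exp (δ₀ * M x) * Real.exp (2 * δ₀ * M x)) := by ring
      _ = γ ^ 2 * (4 / δ₀ ^ 2) * Real.exp (3 * δ₀ * M x) := by rw [h4]
  have hX1_aesm : AEStronglyMeasurable (fun x => (X x - 1) ^ 2 * q x) :=
    (((hX_aesm.sub aestronglyMeasurable_const).pow 2).mul hq_aesm)
  have hb_int : Integrable (fun x => (X x - 1) ^ 2 * q x) := by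
    refine (hK₀_int.const_mul (γ ^ 2 * (4 / δ₀ ^ 2))).mono' hX1_aesm ?_
    refine Filter.Eventually.of_forall fun x => ?_
    rw [Real.norm_eq_abs, abs_of_nonneg (mul_nonneg (sq_nonneg _) (hq_pos x).le)]
    calc (X x - 1) ^ 2 * q x
        ≤ (γ ^ 2 * (4 / δ₀ ^ 2) * Real.exp (3 * δ₀ * M x)) * q x :=
          mul_le_mul_of_nonneg_right (hsq_bound x) (hq_pos x).le
      _ = γ ^ 2 * (4 / δ₀ ^ 2) * (Real.exp (3 * δ₀ * M x) * q x) := by ring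
  have hb_le : ∫ x, (X x - 1) ^ 2 * q x ≤ γ ^ 2 * K' := by
    have h := integral_mono hb_int (hK₀_int.const_mul (γ ^ 2 * (4 / δ₀ ^ 2)))
      (fun x => by
        have := mul_le_mul_of_nonneg_right (hsq_bound x) (hq_pos x).le
        calc (X x - 1) ^ 2 * q x
            ≤ (γ ^ 2 * (4 / δ₀ ^ 2) * Real.exp (3 * δ₀ * M x)) * q x := this
          _ = γ ^ 2 * (4 / δ₀ ^ 2) * (Real.exp (3 * δ₀ * M x) * q x) := by ring)
    rw [integral_const_mul] at h
    calc ∫ x, (X x - 1) ^ 2 * q x ≤ γ ^ 2 * (4 / δ₀ ^ 2) * K₀ := h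
      _ = γ ^ 2 * K' := by rw [hK'def]; ring
  set a := ∫ x, X x * q x with hadef
  have ha_sub : a - 1 = ∫ x, (X x - 1) * q x := by
    have : (fun x => (X x - 1) * q x) = fun x => X x * q x - q x := by
      funext x; ring
    rw [this, integral_sub hXq_int hq_int, hq_one, hadef]
  have ha_close : |a - 1| ≤ γ * K₂ := by
    rw [ha_sub, ← Real.norm_eq_abs]
    have h := norm_integral_le_of_norm_le (f := fun x => (X x - 1) * q x)
      (hK₀_int.const_mul (γ / δ₀))
      (Filter.Eventually.of_forall (fun x => by
        rw [Real.norm_eq_abs, abs_mul, abs_of_nonneg (hq_pos x).le]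
        calc |X x - 1| * q x
            ≤ (γ / δ₀ * Real.exp (3 * δ₀ * M x)) * q x :=
              mul_le_mul_of_nonneg_right (habs_bound x) (hq_pos x).le
          _ = γ / δ₀ * (Real.exp (3 * δ₀ * M x) * q x) := by ring))
    rw [integral_const_mul] at h
    calc ‖∫ x, (X x - 1) * q x‖ ≤ γ / δ₀ * K₀ := h
      _ = γ * K₂ := by rw [hK₂def]; ring
  have hγK₂ : γ * K₂ ≤ 1 / 2 := by
    have hγδ' : γ ≤ 1 / (2 * K₂ + 1) := hγδ.le.trans (min_le_right _ _)
    have h1 : 0 < 2 * K₂ + 1 := by linarith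
    calc γ * K₂ ≤ (1 / (2 * K₂ + 1)) * K₂ := mul_le_mul_of_nonneg_right hγδ' hK₂_nonneg
      _ ≤ 1 / 2 := by
          rw [div_mul_eq_mul_div, div_le_div_iff₀ h1 two_pos]
          nlinarith
  have ha_half : 1 / 2 ≤ a := by
    have h := abs_le.mp ha_close
    linarith [h.1]
  have ha_pos : 0 < a := by linarith
  have hZk : (∫ x, Real.exp (-U θk x)) = a * Zp := by
    have hpt : (fun x => X x * q x) = fun x => Real.exp (-U θk x) / Zp := by
      funext x
      rw [hq_def, hXdef]
      have h1 : Real.exp (U θp x - U θk x) * Real.exp (-U θp x) = Real.exp (-U θk x) := by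
        rw [← Real.exp_add]; ring_nf
      rw [← h1]; ring
    calc (∫ x, Real.exp (-U θk x))
        = ((∫ x, Real.exp (-U θk x)) / Zp) * Zp := (div_mul_cancel₀ _ hZp_pos.ne').symm
      _ = (∫ x, Real.exp (-U θk x) / Zp) * Zp := by rw [integral_div]
      _ = a * Zp := by rw [hadef, hpt]
  have hratio : ∀ x, gibbsDensity U θk x / q x = X x / a := by
    intro x
    rw [show gibbsDensity U θk x = Real.exp (-U θk x) / (a * Zp) by
      rw [gibbsDensity, hZk]]
    rw [hq_def, hXdef]
    have h1 : Real.exp (-U θk x) = Real.exp (U θp x - U θk x) * Real.exp (-U θp x) := by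
      rw [← Real.exp_add]; ring_nf
    rw [h1]
    have he : Real.exp (-U θp x) ≠ 0 := Real.exp_ne_zero _
    field_simp
  have hchi : chiSqDiv (gibbsDensity U θk) q = a⁻¹ ^ 2 * ∫ x, (X x - a) ^ 2 * q x := by
    unfold chiSqDiv
    calc ∫ x, (gibbsDensity U θk x / q x - 1) ^ 2 * q x
        = ∫ x, a⁻¹ ^ 2 * ((X x - a) ^ 2 * q x) := by
          congr 1
          funext x
          rw [hratio x]
          rw [div_sub' ha_pos.ne', div_pow]
          field_simp
      _ = a⁻¹ ^ 2 * ∫ x, (X x - a) ^ 2 * q x := integral_const_mul _ _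
  have hqa_dom : ∀ x, (X x - a) ^ 2 * q x ≤ (2 * (X x - 1) ^ 2 + 2 * (a - 1) ^ 2) * q x := by
    intro x
    refine mul_le_mul_of_nonneg_right ?_ (hq_pos x).le
    nlinarith [sq_nonneg (X x - 1 + (a - 1))]
  have hdom_int : Integrable (fun x => (2 * (X x - 1) ^ 2 + 2 * (a - 1) ^ 2) * q x) := by
    have h1 : (fun x => (2 * (X x - 1) ^ 2 + 2 * (a - 1) ^ 2) * q x)
        = fun x => 2 * ((X x - 1) ^ 2 * q x) + (2 * (a - 1) ^ 2) * q x := by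
      funext x; ring
    rw [h1]
    exact (hb_int.const_mul 2).add (hq_int.const_mul _)
  have hXa_int : Integrable (fun x => (X x - a) ^ 2 * q x) := by
    refine hdom_int.mono'
      (((hX_aesm.sub aestronglyMeasurable_const).pow 2).mul hq_aesm) ?_
    refine Filter.Eventually.of_forall fun x => ?_
    rw [Real.norm_eq_abs, abs_of_nonneg (mul_nonneg (sq_nonneg _) (hq_pos x).le)]
    exact hqa_dom x
  have hXa_le : ∫ x, (X x - a) ^ 2 * q x ≤ 2 * (γ ^ 2 * K') + 2 * (a - 1) ^ 2 := by
    have h := integral_mono hXa_int hdom_int hqa_dom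
    have h2 : ∫ x, (2 * (X x - 1) ^ 2 + 2 * (a - 1) ^ 2) * q x
        = 2 * (∫ x, (X x - 1) ^ 2 * q x) + 2 * (a - 1) ^ 2 := by
      have h1 : (fun x => (2 * (X x - 1) ^ 2 + 2 * (a - 1) ^ 2) * q x)
          = fun x => 2 * ((X x - 1) ^ 2 * q x) + (2 * (a - 1) ^ 2) * q x := by
        funext x; ring
      rw [h1, integral_add (hb_int.const_mul 2) (hq_int.const_mul _),
        integral_const_mul, integral_const_mul, hq_one]
      ring
    rw [h2] at h
    linarith [hb_le]
  have ha1_sq : (a - 1) ^ 2 ≤ γ ^ 2 * K₂ ^ 2 := by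
    rw [← sq_abs]
    calc |a - 1| ^ 2 ≤ (γ * K₂) ^ 2 :=
          pow_le_pow_left₀ (abs_nonneg _) ha_close 2
      _ = γ ^ 2 * K₂ ^ 2 := by ring
  have hainv : a⁻¹ ^ 2 ≤ 4 := by
    have h1 : a⁻¹ ≤ 2 := by
      rw [inv_le_comm₀ ha_pos two_pos]
      linarith
    have h2 : 0 ≤ a⁻¹ := inv_nonneg.mpr ha_pos.le
    nlinarith
  have hchi_le : chiSqDiv (gibbsDensity U θk) q ≤ (8 * K' + 8 * K₂ ^ 2) * γ ^ 2 := by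
    rw [hchi]
    have hI_nonneg : 0 ≤ ∫ x, (X x - a) ^ 2 * q x :=
      integral_nonneg fun x => mul_nonneg (sq_nonneg _) (hq_pos x).le
    calc a⁻¹ ^ 2 * ∫ x, (X x - a) ^ 2 * q x
        ≤ 4 * (2 * (γ ^ 2 * K') + 2 * (a - 1) ^ 2) := by
          have := mul_le_mul hainv hXa_le hI_nonneg (by norm_num)
          linarith
      _ ≤ 4 * (2 * (γ ^ 2 * K') + 2 * (γ ^ 2 * K₂ ^ 2)) := by nlinarith
      _ = (8 * K' + 8 * K₂ ^ 2) * γ ^ 2 := by ring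
  have hrpow : γ ^ 2 ≤ γ ^ ((3 : ℝ) / 2) := by
    have h1 : (γ : ℝ) ^ (2 : ℕ) = γ ^ ((2 : ℝ)) := by
      rw [← Real.rpow_natCast γ 2]; norm_num
    rw [h1]
    exact Real.rpow_le_rpow_of_exponent_ge hγ0 hγ1 (by norm_num)
  have hC_nonneg : 0 ≤ 8 * K' + 8 * K₂ ^ 2 := by positivity
  calc chiSqDiv (gibbsDensity U θk) q
      ≤ (8 * K' + 8 * K₂ ^ 2) * γ ^ 2 := hchi_le
    _ ≤ (8 * K' + 8 * K₂ ^ 2) * γ ^ ((3 : ℝ) / 2) :=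
        mul_le_mul_of_nonneg_left hrpow hC_nonneg
    _ ≤ Real.sqrt (γ ^ 2 * ∫ x, ⟪g, gradient (fun s => U s x) θp⟫ ^ 2 * q x)
        + (8 * K' + 8 * K₂ ^ 2) * γ ^ ((3 : ℝ) / 2) := by
        linarith [Real.sqrt_nonneg
          (γ ^ 2 * ∫ x, ⟪g, gradient (fun s => U s x) θp⟫ ^ 2 * q x)]
end
end

section
/- Let Σ be a symmetric positive-definite d×d real matrix and suppose π_θ is the Gaussian density N(θ, Σ) on ℝ^d for θ ∈ ℝ^d. Let ℓ: ℝ^d → ℝ be differentiable, γ > 0, θ_k = θ_{k−1} − γ∇ℓ(θ_{k−1}), and define for N ∈ ℕ the limiting effective sample size ESS_k^∞(γ) = N / (1 + χ²(π_{θ_k} ‖ π_{θ_{k−1}})). Then ESS_k^∞(γ) = N · exp(−γ² ‖∇ℓ(θ_{k−1})‖²_{Σ^{−1}}), where ‖v‖²_{Σ^{−1}} = vᵀΣ^{−1}v. -/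
open MeasureTheory

noncomputable section

/-- Density of the multivariate Gaussian `N(μ, Σ)` on `ℝ^d`. -/
def gaussDensity {d : ℕ} (S : Matrix (Fin d) (Fin d) ℝ)
    (μ : EuclideanSpace ℝ (Fin d)) (x : EuclideanSpace ℝ (Fin d)) : ℝ :=
  (2 * Real.pi) ^ (-(d : ℝ) / 2) * S.det ^ (-(1 : ℝ) / 2) *
    Real.exp (-(1 / 2) * ∑ i, ∑ j, (x i - μ i) * S⁻¹ i j * (x j - μ j))

section aux

open Matrix Real

variable {d : ℕ}

lemma sum_eq_dot (M : Matrix (Fin d) (Fin d) ℝ) (v w : Fin d → ℝ) :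
    ∑ i, ∑ j, v i * M i j * w j = v ⬝ᵥ M *ᵥ w := by
  simp [dotProduct, mulVec, Finset.mul_sum, mul_assoc]

lemma quad_id (A : Matrix (Fin d) (Fin d) ℝ) (u δ : Fin d → ℝ) :
    (u + δ) ⬝ᵥ A *ᵥ (u + δ) - 2 * (u ⬝ᵥ A *ᵥ u)
      = 2 * (δ ⬝ᵥ A *ᵥ δ) - (u - δ) ⬝ᵥ A *ᵥ (u - δ) := by
  simp only [add_dotProduct, sub_dotProduct, Matrix.mulVec_add, Matrix.mulVec_sub,
    dotProduct_add, dotProduct_sub]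
  ring

lemma integrable_gauss_norm :
    Integrable (fun y : EuclideanSpace ℝ (Fin d) => rexp (-(1/2) * ‖y‖ ^ 2)) := by
  by_contra h
  have h2 := GaussianFourier.integral_rexp_neg_mul_sq_norm (V := EuclideanSpace ℝ (Fin d))
    (b := 1/2) (by norm_num)
  rw [integral_undef h] at h2
  have : (0:ℝ) < (π / (1/2)) ^ ((Module.finrank ℝ (EuclideanSpace ℝ (Fin d))) / 2 : ℝ) :=
    Real.rpow_pos_of_pos (by positivity) _
  linarith [this, h2.symm]

lemma integral_gauss_norm :
    ∫ y : EuclideanSpace ℝ (Fin d), rexp (-(1/2) * ‖y‖ ^ 2) = (2 * π) ^ ((d:ℝ)/2) := by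
  rw [GaussianFourier.integral_rexp_neg_mul_sq_norm (by norm_num : (0:ℝ) < 1/2)]
  rw [finrank_euclideanSpace_fin]
  congr 1
  ring

lemma quad_exp (A : Matrix (Fin d) (Fin d) ℝ) (hA : A.PosDef) :
    Integrable (fun x : EuclideanSpace ℝ (Fin d) =>
        rexp (-(1/2) * ((WithLp.equiv 2 _ x) ⬝ᵥ A *ᵥ (WithLp.equiv 2 _ x)))) ∧
    ∫ x : EuclideanSpace ℝ (Fin d),
        rexp (-(1/2) * ((WithLp.equiv 2 _ x) ⬝ᵥ A *ᵥ (WithLp.equiv 2 _ x)))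
      = A.det ^ (-(1:ℝ)/2) * (2*π) ^ ((d:ℝ)/2) := by
  obtain ⟨R, hRR, hRH⟩ : ∃ R : Matrix (Fin d) (Fin d) ℝ, R * R = A ∧ Rᵀ = R := by
    open scoped MatrixOrder in
    refine ⟨CFC.sqrt A, CFC.sqrt_mul_sqrt_self A hA.posSemidef.nonneg, ?_⟩
    open scoped MatrixOrder in
    have := (CFC.sqrt_nonneg A).posSemidef.isHermitian
    rwa [Matrix.IsHermitian, Matrix.conjTranspose_eq_transpose_of_trivial] at this
  have hdet2 : R.det * R.det = A.det := by rw [← Matrix.det_mul, hRR]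
  have hdet_ne : R.det ≠ 0 := by
    intro h; have := hA.det_pos; rw [← hdet2, h, mul_zero] at this; exact lt_irrefl _ this
  have habs : |R.det| = A.det ^ ((1:ℝ)/2) := by
    rw [← Real.sqrt_eq_rpow, ← hdet2, ← abs_mul_abs_self R.det, Real.sqrt_mul_self (abs_nonneg _)]
  set L := Matrix.toEuclideanLin R with hLdef
  have hdetL : LinearMap.det (L : EuclideanSpace ℝ (Fin d) →ₗ[ℝ] EuclideanSpace ℝ (Fin d))
      = R.det := LinearMap.det_toLin (PiLp.basisFun 2 ℝ (Fin d)) R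
  have hq : ∀ x : EuclideanSpace ℝ (Fin d),
      (WithLp.equiv 2 _ x) ⬝ᵥ A *ᵥ (WithLp.equiv 2 _ x) = ‖L x‖ ^ 2 := by
    intro x
    set y := WithLp.equiv 2 (Fin d → ℝ) x with hy
    have h1 : (R *ᵥ y) ⬝ᵥ (R *ᵥ y) = y ⬝ᵥ A *ᵥ y := by
      rw [Matrix.dotProduct_mulVec (R *ᵥ y) R y, Matrix.vecMul_mulVec, hRH, hRR,
        ← Matrix.dotProduct_mulVec]
    rw [← real_inner_self_eq_norm_sq, PiLp.inner_apply]
    simp only [RCLike.inner_apply, conj_trivial]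
    have h2 : ∑ i, (L x) i * (L x) i = (R *ᵥ y) ⬝ᵥ (R *ᵥ y) := rfl
    rw [h2, h1]
  have hmap : Measure.map (⇑L) (volume : Measure (EuclideanSpace ℝ (Fin d)))
      = ENNReal.ofReal |(R.det)⁻¹| • volume := by
    rw [← hdetL]
    exact Measure.map_linearMap_addHaar_eq_smul_addHaar volume (by rw [hdetL]; exact hdet_ne)
  have hcont : Continuous (⇑L) := LinearMap.continuous_of_finiteDimensional L
  have hgm : AEStronglyMeasurable (fun y : EuclideanSpace ℝ (Fin d) => rexp (-(1/2) * ‖y‖ ^ 2))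
      (Measure.map (⇑L) volume) := by
    apply Continuous.aestronglyMeasurable
    fun_prop
  have hint_map : Integrable (fun y : EuclideanSpace ℝ (Fin d) => rexp (-(1/2) * ‖y‖ ^ 2))
      (Measure.map (⇑L) volume) := by
    rw [hmap]
    exact (integrable_gauss_norm).smul_measure ENNReal.ofReal_ne_top
  have hcomp : Integrable (fun x : EuclideanSpace ℝ (Fin d) => rexp (-(1/2) * ‖L x‖ ^ 2)) :=
    (integrable_map_measure hgm hcont.aemeasurable).mp hint_map
  have heq : (fun x : EuclideanSpace ℝ (Fin d) =>
      rexp (-(1/2) * ((WithLp.equiv 2 _ x) ⬝ᵥ A *ᵥ (WithLp.equiv 2 _ x))))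
      = fun x => rexp (-(1/2) * ‖L x‖ ^ 2) := by
    funext x; rw [hq x]
  constructor
  · rw [heq]; exact hcomp
  · rw [heq]
    have : ∫ x : EuclideanSpace ℝ (Fin d), rexp (-(1/2) * ‖L x‖ ^ 2)
        = ∫ y : EuclideanSpace ℝ (Fin d), rexp (-(1/2) * ‖y‖ ^ 2)
            ∂(Measure.map (⇑L) volume) := by
      rw [integral_map hcont.aemeasurable hgm]
    rw [this, hmap, integral_smul_measure, integral_gauss_norm]
    rw [ENNReal.toReal_ofReal (abs_nonneg _), abs_inv, habs, smul_eq_mul]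
    rw [← Real.rpow_neg_one (A.det ^ ((1:ℝ)/2)), ← Real.rpow_mul hA.det_pos.le]
    norm_num

lemma gauss_shift (S : Matrix (Fin d) (Fin d) ℝ) (μ x : EuclideanSpace ℝ (Fin d)) :
    gaussDensity S μ x = gaussDensity S 0 (x - μ) := by
  simp [gaussDensity, PiLp.sub_apply]

lemma gauss_zero_eq (S : Matrix (Fin d) (Fin d) ℝ) (x : EuclideanSpace ℝ (Fin d)) :
    gaussDensity S 0 x = (2 * π) ^ (-(d:ℝ)/2) * S.det ^ (-(1:ℝ)/2) *
      rexp (-(1/2) * ((WithLp.equiv 2 _ x) ⬝ᵥ S⁻¹ *ᵥ (WithLp.equiv 2 _ x))) := by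
  have : ∑ i, ∑ j, (x i - (0:EuclideanSpace ℝ (Fin d)) i) * S⁻¹ i j
      * (x j - (0:EuclideanSpace ℝ (Fin d)) j)
      = (WithLp.equiv 2 (Fin d → ℝ) x) ⬝ᵥ S⁻¹ *ᵥ (WithLp.equiv 2 (Fin d → ℝ) x) := by
    simp [dotProduct, mulVec, Finset.mul_sum, mul_assoc]
  rw [gaussDensity, this]

lemma gauss_main (S : Matrix (Fin d) (Fin d) ℝ) (hS : S.PosDef)
    (μ : EuclideanSpace ℝ (Fin d)) :
    Integrable (gaussDensity S μ) ∧ ∫ x, gaussDensity S μ x = 1 := by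
  have hA : (S⁻¹).PosDef := hS.inv
  obtain ⟨hint, hval⟩ := quad_exp S⁻¹ hA
  set c : ℝ := (2 * π) ^ (-(d:ℝ)/2) * S.det ^ (-(1:ℝ)/2) with hc
  have h0int : Integrable (gaussDensity S 0) := by
    have : gaussDensity S 0 = fun x => c * rexp (-(1/2) *
        ((WithLp.equiv 2 _ x) ⬝ᵥ S⁻¹ *ᵥ (WithLp.equiv 2 _ x))) := by
      funext x; exact gauss_zero_eq S x
    rw [this]
    exact hint.const_mul c
  have h0val : ∫ x, gaussDensity S 0 x = 1 := by
    have heq : ∀ x, gaussDensity S 0 x = c * rexp (-(1/2) *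
        ((WithLp.equiv 2 _ x) ⬝ᵥ S⁻¹ *ᵥ (WithLp.equiv 2 _ x))) := gauss_zero_eq S
    rw [integral_congr_ae (Filter.Eventually.of_forall heq), integral_const_mul, hval]
    have hdetinv : (S⁻¹).det = (S.det)⁻¹ := by
      rw [Matrix.det_nonsing_inv, Ring.inverse_eq_inv']
    rw [hdetinv, ← Real.rpow_neg_one S.det, ← Real.rpow_mul hS.det_pos.le]
    rw [hc]
    have h2π : (0:ℝ) < 2 * π := by positivity
    rw [show (-1 * (-(1:ℝ)/2)) = (1:ℝ)/2 by norm_num]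
    calc (2*π) ^ (-(d:ℝ)/2) * S.det ^ (-(1:ℝ)/2) * (S.det ^ ((1:ℝ)/2) * (2*π) ^ ((d:ℝ)/2))
        = ((2*π) ^ (-(d:ℝ)/2) * (2*π) ^ ((d:ℝ)/2)) * (S.det ^ (-(1:ℝ)/2) * S.det ^ ((1:ℝ)/2)) := by
          ring
      _ = 1 := by
          rw [← Real.rpow_add h2π, ← Real.rpow_add hS.det_pos,
            show (-(d:ℝ)/2 + (d:ℝ)/2) = 0 by ring,
            show (-(1:ℝ)/2 + (1:ℝ)/2) = 0 by ring,
            Real.rpow_zero, Real.rpow_zero, mul_one]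
  constructor
  · have : gaussDensity S μ = fun x => gaussDensity S 0 (x - μ) := by
      funext x; exact gauss_shift S μ x
    rw [this]; exact h0int.comp_sub_right μ
  · have : ∀ x, gaussDensity S μ x = gaussDensity S 0 (x - μ) := gauss_shift S μ
    rw [integral_congr_ae (Filter.Eventually.of_forall this),
      integral_sub_right_eq_self (gaussDensity S 0) μ, h0val]

lemma gauss_pointwise (S : Matrix (Fin d) (Fin d) ℝ) (hS : S.PosDef)
    (μ0 μ1 : EuclideanSpace ℝ (Fin d)) (K : ℝ)
    (hK : K = ∑ i, ∑ j, (μ1 i - μ0 i) * S⁻¹ i j * (μ1 j - μ0 j))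
    (x : EuclideanSpace ℝ (Fin d)) :
    (gaussDensity S μ1 x / gaussDensity S μ0 x - 1) ^ 2 * gaussDensity S μ0 x
      = rexp K * gaussDensity S (μ1 + (μ1 - μ0)) x
        - 2 * gaussDensity S μ1 x + gaussDensity S μ0 x := by
  set μ2 : EuclideanSpace ℝ (Fin d) := μ1 + (μ1 - μ0) with hμ2
  set c : ℝ := (2 * π) ^ (-(d:ℝ)/2) * S.det ^ (-(1:ℝ)/2) with hc
  have hcpos : 0 < c := mul_pos (Real.rpow_pos_of_pos (by positivity) _)
    (Real.rpow_pos_of_pos hS.det_pos _)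
  set q0 : ℝ := ∑ i, ∑ j, (x i - μ0 i) * S⁻¹ i j * (x j - μ0 j) with hq0d
  set q1 : ℝ := ∑ i, ∑ j, (x i - μ1 i) * S⁻¹ i j * (x j - μ1 j) with hq1d
  set q2 : ℝ := ∑ i, ∑ j, (x i - μ2 i) * S⁻¹ i j * (x j - μ2 j) with hq2d
  have e0 : gaussDensity S μ0 x = c * rexp (-(1/2) * q0) := rfl
  have e1 : gaussDensity S μ1 x = c * rexp (-(1/2) * q1) := rfl
  have e2 : gaussDensity S μ2 x = c * rexp (-(1/2) * q2) := rfl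
  set u : Fin d → ℝ := fun i => x i - μ1 i with hu
  set δ : Fin d → ℝ := fun i => μ1 i - μ0 i with hδ
  have hq0 : q0 = (u + δ) ⬝ᵥ S⁻¹ *ᵥ (u + δ) := by
    rw [← sum_eq_dot, hq0d]
    refine Finset.sum_congr rfl fun i _ => Finset.sum_congr rfl fun j _ => ?_
    simp only [Pi.add_apply, hu, hδ]; ring
  have hq1 : q1 = u ⬝ᵥ S⁻¹ *ᵥ u := by rw [← sum_eq_dot, hq1d]
  have hq2 : q2 = (u - δ) ⬝ᵥ S⁻¹ *ᵥ (u - δ) := by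
    rw [← sum_eq_dot, hq2d]
    refine Finset.sum_congr rfl fun i _ => Finset.sum_congr rfl fun j _ => ?_
    simp only [Pi.sub_apply, hu, hδ, hμ2, PiLp.add_apply, PiLp.sub_apply]; ring
  have hKd : K = δ ⬝ᵥ S⁻¹ *ᵥ δ := by rw [← sum_eq_dot, hK]
  have hrel : q0 - 2 * q1 = 2 * K - q2 := by
    rw [hq0, hq1, hq2, hKd]; exact quad_id S⁻¹ u δ
  have key : rexp (-(1/2) * q1) ^ 2 / rexp (-(1/2) * q0) = rexp K * rexp (-(1/2) * q2) := by
    rw [sq, ← Real.exp_add, ← Real.exp_sub, ← Real.exp_add]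
    congr 1; linarith
  have expand : ∀ a b : ℝ, 0 < b →
      (c * a / (c * b) - 1) ^ 2 * (c * b) = a ^ 2 / b * c - 2 * (c * a) + c * b := by
    intro a b hb
    field_simp
    ring
  rw [e0, e1, e2, expand _ _ (Real.exp_pos _), key]
  ring

end aux

/-- Limiting effective sample size for Gaussian targets `π_θ = N(θ,Σ)` along a gradient
step `θ_k = θ_{k−1} − γ∇ℓ(θ_{k−1})`:
`ESS_k^∞(γ) = N/(1 + χ²(π_{θ_k} ‖ π_{θ_{k−1}})) = N exp(−γ²‖∇ℓ(θ_{k−1})‖²_{Σ⁻¹})`. -/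
theorem gaussian_limiting_ess
    {d : ℕ} (S : Matrix (Fin d) (Fin d) ℝ) (hS : S.PosDef)
    (ℓ : EuclideanSpace ℝ (Fin d) → ℝ)
    (θp : EuclideanSpace ℝ (Fin d))
    (hℓ : DifferentiableAt ℝ ℓ θp)
    (γ : ℝ) (hγ : 0 < γ) (N : ℕ) :
    (N : ℝ) /
        (1 + ∫ x, (gaussDensity S (θp - γ • gradient ℓ θp) x / gaussDensity S θp x - 1) ^ 2 *
          gaussDensity S θp x)
      = (N : ℝ) * Real.exp (-(γ ^ 2 *
          ∑ i, ∑ j, gradient ℓ θp i * S⁻¹ i j * gradient ℓ θp j)) := by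
  set g : EuclideanSpace ℝ (Fin d) := gradient ℓ θp with hg
  set K : ℝ := γ ^ 2 * ∑ i, ∑ j, g i * S⁻¹ i j * g j with hKdef
  set μ0 : EuclideanSpace ℝ (Fin d) := θp with hμ0
  set μ1 : EuclideanSpace ℝ (Fin d) := θp - γ • g with hμ1
  set μ2 : EuclideanSpace ℝ (Fin d) := μ1 + (μ1 - μ0) with hμ2
  have hK' : K = ∑ i, ∑ j, (μ1 i - μ0 i) * S⁻¹ i j * (μ1 j - μ0 j) := by
    rw [hKdef, Finset.mul_sum]
    refine Finset.sum_congr rfl fun i _ => ?_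
    rw [Finset.mul_sum]
    refine Finset.sum_congr rfl fun j _ => ?_
    simp only [hμ1, hμ0, PiLp.sub_apply, PiLp.smul_apply, smul_eq_mul]
    ring
  have hpt := gauss_pointwise S hS μ0 μ1 K hK'
  obtain ⟨hi0, hv0⟩ := gauss_main S hS μ0
  obtain ⟨hi1, hv1⟩ := gauss_main S hS μ1
  obtain ⟨hi2, hv2⟩ := gauss_main S hS μ2
  have hint : (∫ x, (gaussDensity S μ1 x / gaussDensity S μ0 x - 1) ^ 2 * gaussDensity S μ0 x)
      = Real.exp K - 1 := by
    rw [integral_congr_ae (Filter.Eventually.of_forall hpt)]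
    rw [← hμ2]
    have hI : Integrable (fun x => Real.exp K * gaussDensity S μ2 x
        - 2 * gaussDensity S μ1 x) := (hi2.const_mul _).sub (hi1.const_mul 2)
    rw [integral_add hI hi0, integral_sub (hi2.const_mul _) (hi1.const_mul 2)]
    rw [integral_const_mul, integral_const_mul, hv0, hv1, hv2]
    ring
  rw [hint, show (1 : ℝ) + (Real.exp K - 1) = Real.exp K by ring,
    Real.exp_neg, div_eq_mul_inv]
end
end
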